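/- In the general intersection construction (for parameters n ≥ 4 and α), for every s with 1 ≤ s ≤ n−3 and every t with 3+s ≤ t ≤ n: (s+1)(s+2)·ρ(H^(t)) ≥ 2·[ (s+1)·Σ_{j=n−t+1}^{n} ρ(A^(t)_{j,j}) − Σ_{j=n−t+2}^{n} Σ_{ℓ=n−t+1}^{j−1} ρ(A^(t)_{j,ℓ}) ]. -/

import Mathlib

open scoped BigOperators

/-- Column span of a matrix with finitely many columns, as a subspace of `R → F`. -/
def colSpan (F : Type*) [Field F] {R : Type*} {m : ℕ} (M : Matrix R (Fin m) F) :
    Submodule F (R → F) :=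
  Submodule.span F (Set.range fun l : Fin m => fun r => M r l)

/-- The concatenation of the thick columns `Hcol t j'` of `H⁽ᵗ⁾` for `lo ≤ j' ≤ hi`
(all indices 0-indexed), i.e. the restriction of `H⁽ᵗ⁾` to a set of thick columns. -/
def restMat (F : Type*) [Field F] (n a : ℕ) (c : ℕ → Fin n → ℕ)
    (Hcol : ∀ t : ℕ, ∀ j : Fin n, Matrix (Fin n × Fin a) (Fin (c t j)) F)
    (t lo hi : ℕ) :
    Matrix (Fin n × Fin a)
      (Σ j' : {j' : Fin n // lo ≤ (j' : ℕ) ∧ (j' : ℕ) ≤ hi}, Fin (c t j'.val)) F :=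
  Matrix.of fun r p => Hcol t p.1.val r p.2

namespace Stmt18Proof

open Submodule Module

/-- Generic: rank of a matrix equals the finrank of the span of its columns. -/
theorem rank_eq_colspan {F : Type*} [Field F] {R ι : Type*} [Fintype ι] (M : Matrix R ι F) :
    M.rank = finrank F (Submodule.span F (Set.range fun l : ι => fun r => M r l)) := by
  rw [Matrix.rank, Matrix.range_mulVecLin]
  rfl

/-- The key filtration inequality, generic form. -/
theorem gen1 {F M N : Type*} [Field F] [AddCommGroup M] [Module F M]
    [AddCommGroup N] [Module F N] [FiniteDimensional F M] [FiniteDimensional F N]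
    (W : ℕ → Submodule F M) (f : M →ₗ[F] N) (lo : ℕ) :
    ∀ p, lo ≤ p →
      finrank F ((⨆ i ∈ Finset.Ico lo p, W i).map f)
          + ∑ ℓ ∈ Finset.Ico lo p, finrank F ((W ℓ ⊓ ⨆ i ∈ Finset.Ico lo ℓ, W i).map f)
        ≤ ∑ ℓ ∈ Finset.Ico lo p, finrank F ((W ℓ).map f) := by
  intro p hp
  induction p, hp using Nat.le_induction with
  | base =>
      simp [Finset.Ico_self]
  | succ p hp ih =>
      rw [Nat.Ico_succ_right_eq_insert_Ico hp, Finset.sum_insert Finset.right_notMem_Ico,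
        Finset.sum_insert Finset.right_notMem_Ico, Finset.iSup_insert]
      have hmap : ((W p ⊔ ⨆ i ∈ Finset.Ico lo p, W i).map f)
          = (W p).map f ⊔ (⨆ i ∈ Finset.Ico lo p, W i).map f := Submodule.map_sup _ _ _
      set A := (⨆ i ∈ Finset.Ico lo p, W i).map f with hA
      set B := (W p).map f with hB
      have h1 : ((W p ⊓ ⨆ i ∈ Finset.Ico lo p, W i).map f) ≤ B ⊓ A := Submodule.map_inf_le _
      have h2 : finrank F ((W p ⊓ ⨆ i ∈ Finset.Ico lo p, W i).map f) ≤ finrank F ↥(B ⊓ A) :=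
        Submodule.finrank_mono h1
      have h3 : finrank F ↥(B ⊔ A) + finrank F ↥(B ⊓ A) = finrank F ↥B + finrank F ↥A :=
        Submodule.finrank_sup_add_finrank_inf_eq _ _
      rw [hmap]
      omega

/-- Subadditivity corollary of `gen1`. -/
theorem gen2 {F M N : Type*} [Field F] [AddCommGroup M] [Module F M]
    [AddCommGroup N] [Module F N] [FiniteDimensional F M] [FiniteDimensional F N]
    (W : ℕ → Submodule F M) (f : M →ₗ[F] N) (lo p : ℕ) (hp : lo ≤ p) :
    finrank F ((⨆ i ∈ Finset.Ico lo p, W i).map f)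
      ≤ ∑ ℓ ∈ Finset.Ico lo p, finrank F ((W ℓ).map f) :=
  le_trans (Nat.le_add_right _ _) (gen1 W f lo p hp)

variable {F : Type*} [Field F] {n a : ℕ}

/-- The `j`-th block-row projection. -/
noncomputable def pr (F : Type*) [Field F] (n a : ℕ) (j : ℕ) :
    ((Fin n × Fin a) → F) →ₗ[F] (Fin a → F) :=
  if h : j < n then LinearMap.funLeft F F (fun x => (⟨j, h⟩, x)) else 0

variable (c : ℕ → Fin n → ℕ)
  (Hcol : ∀ t : ℕ, ∀ j : Fin n, Matrix (Fin n × Fin a) (Fin (c t j)) F)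

/-- The column span of the `j`-th thick column of `H⁽ᵗ⁾`, `ℕ`-indexed with `⊥` padding. -/
noncomputable def Vs (t j : ℕ) : Submodule F ((Fin n × Fin a) → F) :=
  if h : j < n then colSpan F (Hcol t ⟨j, h⟩) else ⊥

/-- Prefix span. -/
noncomputable def Pv (t j : ℕ) : Submodule F ((Fin n × Fin a) → F) :=
  ⨆ i ∈ Finset.Ico (n - t) j, Vs c Hcol t i

noncomputable def oo (t j ℓ : ℕ) : ℕ :=
  finrank F ((Vs c Hcol t ℓ).map (pr F n a j))

noncomputable def dd (t j : ℕ) : ℕ :=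
  finrank F ((Vs c Hcol t j).map (pr F n a j))

noncomputable def rowO (t j : ℕ) : ℕ := ∑ ℓ ∈ Finset.Ico (n - t) j, oo c Hcol t j ℓ

noncomputable def OO (t : ℕ) : ℕ := ∑ j ∈ Finset.Ico (n - t) n, rowO c Hcol t j
noncomputable def DD (t : ℕ) : ℕ := ∑ j ∈ Finset.Ico (n - t) n, dd c Hcol t j
noncomputable def RR (t : ℕ) : ℕ := finrank F (Pv c Hcol t n)

theorem Vs_pos (t : ℕ) {j : ℕ} (h : j < n) :
    Vs c Hcol t j = colSpan F (Hcol t ⟨j, h⟩) := dif_pos h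

theorem Vs_neg (t : ℕ) {j : ℕ} (h : ¬ j < n) : Vs c Hcol t j = ⊥ := dif_neg h

theorem Pv_succ (t : ℕ) {j : ℕ} (hj : n - t ≤ j) :
    Pv c Hcol t (j + 1) = Pv c Hcol t j ⊔ Vs c Hcol t j := by
  unfold Pv
  rw [Nat.Ico_succ_right_eq_insert_Ico hj, Finset.iSup_insert]
  exact sup_comm _ _

theorem Pv_base (t : ℕ) : Pv c Hcol t (n - t) = ⊥ := by
  unfold Pv
  simp [Finset.Ico_self]

section Main

variable (hcn : ∀ j : Fin n, c n j = a)
  (hdiag : ∀ i : Fin n, ∀ x : Fin a, ∀ y : Fin (c n i),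
    Hcol n i (i, x) y = if (x : ℕ) = (y : ℕ) then 1 else 0)
  (hbasis : ∀ t : ℕ, 3 ≤ t → t ≤ n - 1 → ∀ j : Fin n, n - t ≤ (j : ℕ) →
    LinearIndependent F
      (fun l : Fin (c t j) => (fun r => Hcol t j r l : (Fin n × Fin a) → F)) ∧
    colSpan F (Hcol t j)
      = colSpan F (Hcol (t + 1) j) ⊓
          ⨆ j' : {j' : Fin n // n - t - 1 ≤ (j' : ℕ) ∧ (j' : ℕ) < (j : ℕ)},
            colSpan F (Hcol (t + 1) j'.val))

include hbasis in
/-- `V⁽ᵗ⁾_j ⊆ V⁽ⁿ⁾_j`. -/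
theorem chain : ∀ m t j : ℕ, t + m = n → 3 ≤ t → n - t ≤ j →
    Vs c Hcol t j ≤ Vs c Hcol n j := by
  intro m
  induction m with
  | zero =>
      intro t j htm _ _
      have : t = n := by omega
      subst this
      exact le_rfl
  | succ m ih =>
      intro t j htm h3 hj
      by_cases hjn : j < n
      · have hb := (hbasis t h3 (by omega) ⟨j, hjn⟩ hj).2
        have h1 : Vs c Hcol t j ≤ Vs c Hcol (t + 1) j := by
          rw [Vs_pos c Hcol t hjn, Vs_pos c Hcol (t + 1) hjn, hb]
          exact inf_le_left
        exact h1.trans (ih (t + 1) j (by omega) (by omega) (by omega))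
      · rw [Vs_neg c Hcol t hjn]
        exact bot_le

include hcn hdiag in
/-- The block-row projection is injective on the top-level thick column span. -/
theorem pr_inj (j : ℕ) (hjn : j < n) :
    ∀ x ∈ Vs c Hcol n j, pr F n a j x = 0 → x = 0 := by
  intro x hx h0
  set j' : Fin n := ⟨j, hjn⟩ with hj'
  rw [Vs_pos c Hcol n hjn, colSpan] at hx
  obtain ⟨co, hco⟩ := (mem_span_range_iff_exists_fun F).mp hx
  have hall : ∀ y : Fin (c n j'), co y = 0 := by
    intro y
    have hya : (y : ℕ) < a := by rw [← hcn j']; exact y.isLt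
    set z : Fin a := ⟨(y : ℕ), hya⟩ with hz
    have h0z : pr F n a j x z = 0 := by rw [h0]; rfl
    have hpr : pr F n a j x z = x (j', z) := by
      rw [pr, dif_pos hjn]
      rfl
    have hxz : x (j', z) = ∑ y' : Fin (c n j'), co y' * Hcol n j' (j', z) y' := by
      rw [← hco, Finset.sum_apply]
      simp [Pi.smul_apply, smul_eq_mul]
      rfl
    have hsum : ∑ y' : Fin (c n j'), co y' * Hcol n j' (j', z) y' = co y := by
      rw [Finset.sum_eq_single y]
      · rw [hdiag j' z y]
        simp [hz]
      · intro y' _ hy'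
        rw [hdiag j' z y']
        have : ¬ ((z : ℕ) = (y' : ℕ)) := by
          simp only [hz]
          intro hcontra
          exact hy' (Fin.ext hcontra.symm)
        simp [this]
      · intro hy
        exact absurd (Finset.mem_univ y) hy
    rw [hpr, hxz, hsum] at h0z
    exact h0z
  have : x = 0 := by
    rw [← hco]
    apply Finset.sum_eq_zero
    intro y _
    rw [hall y, zero_smul]
  exact this

include hcn hdiag hbasis in
/-- Ranks are preserved by the block-row projection on subspaces of the thick column span. -/
theorem finrank_map_eq (t j : ℕ) (h3 : 3 ≤ t) (htn : t ≤ n) (hj : n - t ≤ j)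
    (W : Submodule F ((Fin n × Fin a) → F)) (hW : W ≤ Vs c Hcol t j) :
    finrank F (W.map (pr F n a j)) = finrank F W := by
  by_cases hjn : j < n
  · have hWn : W ≤ Vs c Hcol n j :=
      hW.trans (chain c Hcol hbasis (n - t) t j (by omega) h3 hj)
    have hker : ∀ x ∈ W, pr F n a j x = 0 → x = 0 := fun x hx h0 =>
      pr_inj c Hcol hcn hdiag j hjn x (hWn hx) h0
    have hmap : W.map (pr F n a j) = LinearMap.range ((pr F n a j).comp W.subtype) := by
      rw [LinearMap.range_comp, Submodule.range_subtype]
    have hinj : Function.Injective ((pr F n a j).comp W.subtype) := by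
      intro u v huv
      have h1 : pr F n a j ((u : (Fin n × Fin a) → F) - v) = 0 := by
        have heq : pr F n a j (u : (Fin n × Fin a) → F)
            = pr F n a j (v : (Fin n × Fin a) → F) := huv
        rw [map_sub, heq, sub_self]
      have h2 : ((u : (Fin n × Fin a) → F) - v) ∈ W := sub_mem u.2 v.2
      have h3 := hker _ h2 h1
      exact Subtype.ext (by rwa [sub_eq_zero] at h3)
    rw [hmap, LinearMap.finrank_range_of_inj hinj]
  · have hbot : W = ⊥ := by
      rw [Vs_neg c Hcol t hjn] at hW
      exact le_bot_iff.mp hW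
    rw [hbot]
    simp

theorem iSup_sub_eq (t lo jj : ℕ) (hjj : jj ≤ n) :
    (⨆ j' : {j' : Fin n // lo ≤ (j' : ℕ) ∧ (j' : ℕ) < jj}, colSpan F (Hcol t j'.val))
      = ⨆ i ∈ Finset.Ico lo jj, Vs c Hcol t i := by
  apply le_antisymm
  · apply iSup_le
    rintro ⟨j', hj1, hj2⟩
    have hlt : (j' : ℕ) < n := j'.isLt
    have hV : colSpan F (Hcol t j') = Vs c Hcol t (j' : ℕ) := by
      rw [Vs_pos c Hcol t hlt]
    rw [hV]
    exact le_biSup _ (Finset.mem_Ico.mpr ⟨hj1, hj2⟩)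
  · apply iSup₂_le
    intro i hi
    rcases Finset.mem_Ico.mp hi with ⟨h1, h2⟩
    have hlt : i < n := lt_of_lt_of_le h2 hjj
    rw [Vs_pos c Hcol t hlt]
    exact le_iSup_of_le ⟨⟨i, hlt⟩, ⟨h1, h2⟩⟩ le_rfl

include hbasis in
theorem Y_eq (t j : ℕ) (h4 : 4 ≤ t) (htn : t ≤ n) (hj1 : n - t + 1 ≤ j) (hjn : j < n) :
    Vs c Hcol (t - 1) j = Vs c Hcol t j ⊓ Pv c Hcol t j := by
  have hb := (hbasis (t - 1) (by omega) (by omega) ⟨j, hjn⟩ (by show n - (t-1) ≤ j; omega)).2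
  have ht1 : t - 1 + 1 = t := by omega
  have hsub : n - (t - 1) - 1 = n - t := by omega
  rw [ht1, hsub] at hb
  rw [Vs_pos c Hcol (t - 1) hjn, Vs_pos c Hcol t hjn, hb]
  congr 1
  have := iSup_sub_eq c Hcol t (n - t) j (le_of_lt hjn)
  exact this.trans (by rfl)

include hcn hdiag hbasis in
theorem base (t : ℕ) (h3 : 3 ≤ t) (htn : t ≤ n) :
    DD c Hcol t ≤ OO c Hcol t + RR c Hcol t := by
  have key : ∀ m, n - t ≤ m → m ≤ n →
      ∑ j ∈ Finset.Ico (n - t) m, dd c Hcol t j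
        ≤ (∑ j ∈ Finset.Ico (n - t) m, rowO c Hcol t j) + finrank F (Pv c Hcol t m) := by
    intro m hm
    induction m, hm using Nat.le_induction with
    | base =>
        intro _
        simp [Finset.Ico_self]
    | succ p hp ih =>
        intro hpn
        have hpn' : p < n := by omega
        have ihp := ih (by omega)
        rw [Nat.Ico_succ_right_eq_insert_Ico hp,
          Finset.sum_insert Finset.right_notMem_Ico,
          Finset.sum_insert Finset.right_notMem_Ico]
        have hdd : dd c Hcol t p = finrank F (Vs c Hcol t p) :=
          finrank_map_eq c Hcol hcn hdiag hbasis t p h3 htn hp _ le_rfl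
        have hmod : finrank F ↥(Vs c Hcol t p ⊔ Pv c Hcol t p)
            + finrank F ↥(Vs c Hcol t p ⊓ Pv c Hcol t p)
            = finrank F (Vs c Hcol t p) + finrank F (Pv c Hcol t p) :=
          Submodule.finrank_sup_add_finrank_inf_eq _ _
        have hPs : finrank F (Pv c Hcol t (p + 1))
            = finrank F ↥(Vs c Hcol t p ⊔ Pv c Hcol t p) := by
          rw [Pv_succ c Hcol t hp, sup_comm]
        have hY : finrank F ↥(Vs c Hcol t p ⊓ Pv c Hcol t p)
            = finrank F ((Vs c Hcol t p ⊓ Pv c Hcol t p).map (pr F n a p)) :=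
          (finrank_map_eq c Hcol hcn hdiag hbasis t p h3 htn hp _ inf_le_left).symm
        have hY2 : finrank F ((Vs c Hcol t p ⊓ Pv c Hcol t p).map (pr F n a p))
            ≤ finrank F ((Pv c Hcol t p).map (pr F n a p)) :=
          Submodule.finrank_mono (Submodule.map_mono inf_le_right)
        have hG : finrank F ((Pv c Hcol t p).map (pr F n a p)) ≤ rowO c Hcol t p := by
          unfold Pv rowO oo
          exact gen2 _ _ _ _ hp
        omega
  have := key n (by omega) le_rfl
  unfold DD OO RR
  omega

include hcn hdiag hbasis in
theorem chainCI (t : ℕ) (h4 : 4 ≤ t) (htn : t ≤ n) :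
    OO c Hcol (t - 1) + DD c Hcol (t - 1) ≤ OO c Hcol t := by
  have hlo : n - (t - 1) = n - t + 1 := by omega
  have hrow : ∀ j, n - t + 1 ≤ j → j < n →
      dd c Hcol (t - 1) j + rowO c Hcol (t - 1) j ≤ rowO c Hcol t j := by
    intro j hj hjn
    have hg := gen1 (Vs c Hcol t) (pr F n a j) (n - t) j (by omega)
    have h1 : dd c Hcol (t - 1) j
        ≤ finrank F ((⨆ i ∈ Finset.Ico (n - t) j, Vs c Hcol t i).map (pr F n a j)) := by
      unfold dd
      apply Submodule.finrank_mono
      apply Submodule.map_mono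
      rw [Y_eq c Hcol hbasis t j h4 htn hj hjn]
      exact inf_le_right.trans (le_of_eq rfl)
    have h2 : rowO c Hcol (t - 1) j
        ≤ ∑ ℓ ∈ Finset.Ico (n - t) j,
            finrank F ((Vs c Hcol t ℓ ⊓ ⨆ i ∈ Finset.Ico (n - t) ℓ, Vs c Hcol t i).map
              (pr F n a j)) := by
      unfold rowO oo
      rw [hlo]
      have heq : ∀ ℓ ∈ Finset.Ico (n - t + 1) j,
          finrank F ((Vs c Hcol (t - 1) ℓ).map (pr F n a j))
            = finrank F ((Vs c Hcol t ℓ ⊓ ⨆ i ∈ Finset.Ico (n - t) ℓ, Vs c Hcol t i).map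
                (pr F n a j)) := by
        intro ℓ hℓ
        rcases Finset.mem_Ico.mp hℓ with ⟨hℓ1, hℓ2⟩
        have hℓn : ℓ < n := by omega
        rw [Y_eq c Hcol hbasis t ℓ h4 htn hℓ1 hℓn]
        rfl
      rw [Finset.sum_congr rfl heq]
      apply Finset.sum_le_sum_of_subset
      apply Finset.Ico_subset_Ico_left
      omega
    have hub : finrank F ((⨆ i ∈ Finset.Ico (n - t) j, Vs c Hcol t i).map (pr F n a j))
        + ∑ ℓ ∈ Finset.Ico (n - t) j,
            finrank F ((Vs c Hcol t ℓ ⊓ ⨆ i ∈ Finset.Ico (n - t) ℓ, Vs c Hcol t i).map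
              (pr F n a j))
        ≤ rowO c Hcol t j := hg
    omega
  have hsub : Finset.Ico (n - t + 1) n ⊆ Finset.Ico (n - t) n :=
    Finset.Ico_subset_Ico_left (by omega)
  calc OO c Hcol (t - 1) + DD c Hcol (t - 1)
      = ∑ j ∈ Finset.Ico (n - t + 1) n,
          (dd c Hcol (t - 1) j + rowO c Hcol (t - 1) j) := by
        unfold OO DD
        rw [hlo, Finset.sum_add_distrib]
        omega
    _ ≤ ∑ j ∈ Finset.Ico (n - t + 1) n, rowO c Hcol t j := by
        apply Finset.sum_le_sum
        intro j hj
        rcases Finset.mem_Ico.mp hj with ⟨hj1, hj2⟩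
        exact hrow j hj1 hj2
    _ ≤ ∑ j ∈ Finset.Ico (n - t) n, rowO c Hcol t j :=
        Finset.sum_le_sum_of_subset hsub
    _ = OO c Hcol t := rfl

include hcn hdiag hbasis in
theorem DReq (t : ℕ) (h4 : 4 ≤ t) (htn : t ≤ n) :
    DD c Hcol t = DD c Hcol (t - 1) + RR c Hcol t := by
  have hlo : n - (t - 1) = n - t + 1 := by omega
  have key : ∀ m, n - t + 1 ≤ m → m ≤ n →
      (∑ j ∈ Finset.Ico (n - t + 1) m, dd c Hcol (t - 1) j) + finrank F (Pv c Hcol t m)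
        = (∑ j ∈ Finset.Ico (n - t + 1) m, dd c Hcol t j)
            + finrank F (Pv c Hcol t (n - t + 1)) := by
    intro m hm
    induction m, hm using Nat.le_induction with
    | base => intro _; simp [Finset.Ico_self]
    | succ p hp ih =>
        intro hpn
        have hpn' : p < n := by omega
        have ihp := ih (by omega)
        have hddt : dd c Hcol t p = finrank F (Vs c Hcol t p) :=
          finrank_map_eq c Hcol hcn hdiag hbasis t p (by omega) htn (by omega) _ le_rfl
        have hddt1 : dd c Hcol (t - 1) p = finrank F (Vs c Hcol (t - 1) p) :=
          finrank_map_eq c Hcol hcn hdiag hbasis (t - 1) p (by omega) (by omega)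
            (by omega) _ le_rfl
        have hYp : finrank F (Vs c Hcol (t - 1) p)
            = finrank F ↥(Vs c Hcol t p ⊓ Pv c Hcol t p) := by
          rw [Y_eq c Hcol hbasis t p h4 htn hp hpn']
        have hmod : finrank F ↥(Vs c Hcol t p ⊔ Pv c Hcol t p)
            + finrank F ↥(Vs c Hcol t p ⊓ Pv c Hcol t p)
            = finrank F (Vs c Hcol t p) + finrank F (Pv c Hcol t p) :=
          Submodule.finrank_sup_add_finrank_inf_eq _ _
        have hPs : finrank F (Pv c Hcol t (p + 1))
            = finrank F ↥(Vs c Hcol t p ⊔ Pv c Hcol t p) := by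
          rw [Pv_succ c Hcol t (by omega), sup_comm]
        rw [Nat.Ico_succ_right_eq_insert_Ico hp,
          Finset.sum_insert Finset.right_notMem_Ico,
          Finset.sum_insert Finset.right_notMem_Ico]
        omega
  have hfin := key n (by omega) le_rfl
  have hP1 : finrank F (Pv c Hcol t (n - t + 1)) = dd c Hcol t (n - t) := by
    have hPv : Pv c Hcol t (n - t + 1) = Vs c Hcol t (n - t) := by
      rw [Pv_succ c Hcol t le_rfl, Pv_base, bot_sup_eq]
    rw [hPv]
    exact (finrank_map_eq c Hcol hcn hdiag hbasis t (n - t) (by omega) htn le_rfl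
      _ le_rfl).symm
  have hnt : n - t ∉ Finset.Ico (n - t + 1) n := by
    simp [Finset.mem_Ico]
  have hDD : DD c Hcol t = dd c Hcol t (n - t) + ∑ j ∈ Finset.Ico (n - t + 1) n, dd c Hcol t j := by
    unfold DD
    rw [← Finset.insert_Ico_add_one_left_eq_Ico (show n - t < n by omega), Finset.sum_insert hnt]
  have hDD1 : DD c Hcol (t - 1) = ∑ j ∈ Finset.Ico (n - t + 1) n, dd c Hcol (t - 1) j := by
    unfold DD
    rw [hlo]
  have hRR : RR c Hcol t = finrank F (Pv c Hcol t n) := rfl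
  omega

include hbasis in
theorem Rmono (t : ℕ) (h4 : 4 ≤ t) (htn : t ≤ n) : RR c Hcol (t - 1) ≤ RR c Hcol t := by
  apply Submodule.finrank_mono
  unfold Pv
  apply iSup₂_le
  intro i hi
  rcases Finset.mem_Ico.mp hi with ⟨h1, h2⟩
  have h1' : n - t + 1 ≤ i := by omega
  have hle : Vs c Hcol (t - 1) i ≤ Vs c Hcol t i := by
    rw [Y_eq c Hcol hbasis t i h4 htn h1' h2]
    exact inf_le_left
  exact hle.trans (le_biSup _ (Finset.mem_Ico.mpr ⟨by omega, h2⟩))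

include hcn hdiag hbasis in
theorem mainIneq : ∀ s t : ℕ, 3 + s ≤ t → t ≤ n →
    2 * (s + 1) * DD c Hcol t ≤ 2 * OO c Hcol t + (s + 1) * (s + 2) * RR c Hcol t := by
  intro s
  induction s with
  | zero =>
      intro t h3 htn
      have hb := base c Hcol hcn hdiag hbasis t (by omega) htn
      have e1 : 2 * (0 + 1) * DD c Hcol t = 2 * DD c Hcol t := by ring
      have e2 : (0 + 1) * (0 + 2) * RR c Hcol t = 2 * RR c Hcol t := by ring
      omega
  | succ s ih =>
      intro t h3 htn
      have h4 : 4 ≤ t := by omega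
      have iht := ih (t - 1) (by omega) (by omega)
      have hci := chainCI c Hcol hcn hdiag hbasis t h4 htn
      have hdr := DReq c Hcol hcn hdiag hbasis t h4 htn
      have hrm := Rmono c Hcol hbasis t h4 htn
      have e1 : 2 * (s + 1 + 1) * DD c Hcol t
          = 2 * (s + 1) * DD c Hcol (t - 1) + 2 * DD c Hcol (t - 1)
            + 2 * (s + 1 + 1) * RR c Hcol t := by rw [hdr]; ring
      have e2 : 2 * (s + 1) * DD c Hcol (t - 1)
          ≤ 2 * OO c Hcol (t - 1) + (s + 1) * (s + 2) * RR c Hcol (t - 1) := iht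
      have e3 : (s + 1) * (s + 2) * RR c Hcol (t - 1)
          ≤ (s + 1) * (s + 2) * RR c Hcol t := Nat.mul_le_mul_left _ hrm
      have e5 : (s + 1) * (s + 2) * RR c Hcol t + 2 * (s + 1 + 1) * RR c Hcol t
          = (s + 1 + 1) * (s + 1 + 2) * RR c Hcol t := by ring
      omega

end Main


/-- Convert a filtered `Fin n` sum to an `Ico` sum. -/
theorem sum_fin_to_Ico {n : ℕ} {M : Type*} [AddCommMonoid M] (lo hi : ℕ) (hhi : hi ≤ n)
    (f : Fin n → M) (g : ℕ → M) (hfg : ∀ (i : ℕ) (h : i < n), g i = f ⟨i, h⟩) :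
    ∑ j ∈ Finset.univ.filter (fun j : Fin n => lo ≤ (j : ℕ) ∧ (j : ℕ) < hi), f j
      = ∑ i ∈ Finset.Ico lo hi, g i := by
  refine Finset.sum_bij' (fun (j : Fin n) _ => (j : ℕ))
    (fun (i : ℕ) hi' => (⟨i, by rcases Finset.mem_Ico.mp hi' with ⟨h1, h2⟩; omega⟩ : Fin n))
    ?_ ?_ ?_ ?_ ?_
  · intro j hj
    rcases Finset.mem_filter.mp hj with ⟨-, h1, h2⟩
    exact Finset.mem_Ico.mpr ⟨h1, h2⟩
  · intro i hi'
    rcases Finset.mem_Ico.mp hi' with ⟨h1, h2⟩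
    exact Finset.mem_filter.mpr ⟨Finset.mem_univ _, h1, h2⟩
  · intro j _
    rfl
  · intro i _
    rfl
  · intro j hj
    rw [hfg (j : ℕ) j.isLt]

/-- One-sided filter version. -/
theorem sum_fin_to_Ico' {n : ℕ} {M : Type*} [AddCommMonoid M] (lo : ℕ)
    (f : Fin n → M) (g : ℕ → M) (hfg : ∀ (i : ℕ) (h : i < n), g i = f ⟨i, h⟩) :
    ∑ j ∈ Finset.univ.filter (fun j : Fin n => lo ≤ (j : ℕ)), f j
      = ∑ i ∈ Finset.Ico lo n, g i := by
  rw [← sum_fin_to_Ico lo n le_rfl f g hfg]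
  apply Finset.sum_congr _ (fun _ _ => rfl)
  apply Finset.filter_congr
  intro j _
  simp [j.isLt]

theorem block_rank (t : ℕ) (jr ℓf : Fin n) :
    (Matrix.of fun (x : Fin a) (y : Fin (c t ℓf)) => Hcol t ℓf (jr, x) y).rank
      = finrank F ((Vs c Hcol t (ℓf : ℕ)).map (pr F n a (jr : ℕ))) := by
  rw [rank_eq_colspan, Vs_pos c Hcol t ℓf.isLt]
  have hfun : ((pr F n a (jr : ℕ)) ∘ (fun (y : Fin (c t ℓf)) => fun (r : Fin n × Fin a) =>
      Hcol t ℓf r y))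
      = fun (y : Fin (c t ℓf)) => fun (x : Fin a) =>
          (Matrix.of fun (x : Fin a) (y : Fin (c t ℓf)) => Hcol t ℓf (jr, x) y) x y := by
    funext y x
    simp only [Function.comp_apply, pr, dif_pos jr.isLt]
    rfl
  rw [colSpan, Submodule.map_span, ← Set.range_comp, hfun]

theorem restMat_rank (t : ℕ) (h1 : 1 ≤ t) (htn : t ≤ n) (h1n : 1 ≤ n) :
    (restMat F n a c Hcol t (n - t) (n - 1)).rank = RR c Hcol t := by
  rw [rank_eq_colspan]
  have hspan : Submodule.span F
      (Set.range fun p : (Σ j' : {j' : Fin n // n - t ≤ (j' : ℕ) ∧ (j' : ℕ) ≤ n - 1},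
          Fin (c t j'.val)) => fun r => restMat F n a c Hcol t (n - t) (n - 1) r p)
      = Pv c Hcol t n := by
    apply le_antisymm
    · rw [Submodule.span_le]
      rintro _ ⟨⟨⟨j', hj1, hj2⟩, y⟩, rfl⟩
      have hjn : (j' : ℕ) < n := j'.isLt
      have hcol : (fun r => Hcol t j' r y) ∈ Vs c Hcol t (j' : ℕ) := by
        rw [Vs_pos c Hcol t hjn]
        exact Submodule.subset_span ⟨y, rfl⟩
      have hle : Vs c Hcol t (j' : ℕ) ≤ Pv c Hcol t n :=
        le_biSup _ (Finset.mem_Ico.mpr ⟨hj1, hjn⟩)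
      exact hle hcol
    · apply iSup₂_le
      intro i hi
      rcases Finset.mem_Ico.mp hi with ⟨hi1, hi2⟩
      rw [Vs_pos c Hcol t hi2]
      rw [colSpan, Submodule.span_le]
      rintro _ ⟨y, rfl⟩
      exact Submodule.subset_span ⟨⟨⟨⟨i, hi2⟩, hi1, by omega⟩, y⟩, rfl⟩
  rw [hspan]
  rfl

end Stmt18Proof

set_option maxHeartbeats 1000000 in
/-- Theorem 5: in the general intersection construction, for every
`1 ≤ s ≤ n-3` and every `3+s ≤ t ≤ n`,
`(s+1)(s+2) ρ(H⁽ᵗ⁾) ≥ 2[(s+1) ∑_j ρ(A⁽ᵗ⁾_{j,j}) - ∑_j ∑_{ℓ<j} ρ(A⁽ᵗ⁾_{j,ℓ})]`,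
sums over the thick columns of `H⁽ᵗ⁾` (0-indexed `n-t ≤ j ≤ n-1`). -/
theorem stmt18 (F : Type*) [Field F] (n a : ℕ) (hn : 4 ≤ n) (ha : 1 ≤ a)
    (c : ℕ → Fin n → ℕ)
    (Hcol : ∀ t : ℕ, ∀ j : Fin n, Matrix (Fin n × Fin a) (Fin (c t j)) F)
    -- the top level `H⁽ⁿ⁾` has thick columns of width `α` ...
    (hcn : ∀ j : Fin n, c n j = a)
    -- ... and its diagonal blocks `A⁽ⁿ⁾_{i,i}` equal the identity `I_α`
    (hdiag : ∀ i : Fin n, ∀ x : Fin a, ∀ y : Fin (c n i),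
      Hcol n i (i, x) y = if (x : ℕ) = (y : ℕ) then 1 else 0)
    -- for `3 ≤ t ≤ n-1`, the columns of the `j`-th thick column of `H⁽ᵗ⁾` form a
    -- basis of `S(H⁽ᵗ⁺¹⁾_j) ∩ S(H⁽ᵗ⁺¹⁾|_{{n-t, …, j-1}})` (set 0-indexed here)
    (hbasis : ∀ t : ℕ, 3 ≤ t → t ≤ n - 1 → ∀ j : Fin n, n - t ≤ (j : ℕ) →
      LinearIndependent F
        (fun l : Fin (c t j) => (fun r => Hcol t j r l : (Fin n × Fin a) → F)) ∧
      colSpan F (Hcol t j)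
        = colSpan F (Hcol (t + 1) j) ⊓
            ⨆ j' : {j' : Fin n // n - t - 1 ≤ (j' : ℕ) ∧ (j' : ℕ) < (j : ℕ)},
              colSpan F (Hcol (t + 1) j'.val))
    :
    ∀ s : ℕ, 1 ≤ s → s ≤ n - 3 → ∀ t : ℕ, 3 + s ≤ t → t ≤ n →
      ((s : ℤ) + 1) * ((s : ℤ) + 2) *
          ((restMat F n a c Hcol t (n - t) (n - 1)).rank : ℤ)
        ≥ 2 * (((s : ℤ) + 1) *
              (∑ j ∈ Finset.univ.filter (fun j : Fin n => n - t ≤ (j : ℕ)),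
                ((Matrix.of fun (x : Fin a) (l : Fin (c t j)) =>
                    Hcol t j (j, x) l).rank : ℤ))
            - ∑ j ∈ Finset.univ.filter (fun j : Fin n => n - t + 1 ≤ (j : ℕ)),
                ∑ l ∈ Finset.univ.filter
                    (fun l : Fin n => n - t ≤ (l : ℕ) ∧ (l : ℕ) < (j : ℕ)),
                  ((Matrix.of fun (x : Fin a) (y : Fin (c t l)) =>
                      Hcol t l (j, x) y).rank : ℤ)) := by
  intro s hs1 hs2 t ht1 ht2
  have h3 : 3 ≤ t := by omega
  have key := Stmt18Proof.mainIneq c Hcol hcn hdiag hbasis s t ht1 ht2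
  -- identify R
  have hR : ((restMat F n a c Hcol t (n - t) (n - 1)).rank : ℤ)
      = (Stmt18Proof.RR c Hcol t : ℤ) := by
    exact_mod_cast congrArg (Nat.cast : ℕ → ℤ)
      (Stmt18Proof.restMat_rank c Hcol t (by omega) ht2 (by omega))
  -- identify D
  have hD : (∑ j ∈ Finset.univ.filter (fun j : Fin n => n - t ≤ (j : ℕ)),
        ((Matrix.of fun (x : Fin a) (l : Fin (c t j)) =>
            Hcol t j (j, x) l).rank : ℤ))
      = (Stmt18Proof.DD c Hcol t : ℤ) := by
    rw [Stmt18Proof.sum_fin_to_Ico' (n - t)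
      (fun j : Fin n => ((Matrix.of fun (x : Fin a) (l : Fin (c t j)) =>
          Hcol t j (j, x) l).rank : ℤ))
      (fun i => (Stmt18Proof.dd c Hcol t i : ℤ))
      (fun i h => by
        have hnat : Stmt18Proof.dd c Hcol t i
            = (Matrix.of fun (x : Fin a) (l : Fin (c t (⟨i, h⟩ : Fin n))) =>
                Hcol t ⟨i, h⟩ ((⟨i, h⟩ : Fin n), x) l).rank :=
          (Stmt18Proof.block_rank c Hcol t ⟨i, h⟩ ⟨i, h⟩).symm
        exact congrArg (Nat.cast : ℕ → ℤ) hnat)]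
    simp only [Stmt18Proof.DD, Nat.cast_sum]
  -- identify O
  have hO : (∑ j ∈ Finset.univ.filter (fun j : Fin n => n - t + 1 ≤ (j : ℕ)),
        ∑ l ∈ Finset.univ.filter
            (fun l : Fin n => n - t ≤ (l : ℕ) ∧ (l : ℕ) < (j : ℕ)),
          ((Matrix.of fun (x : Fin a) (y : Fin (c t l)) =>
              Hcol t l (j, x) y).rank : ℤ))
      = (Stmt18Proof.OO c Hcol t : ℤ) := by
    have hout : (∑ j ∈ Finset.univ.filter (fun j : Fin n => n - t + 1 ≤ (j : ℕ)),
          ∑ l ∈ Finset.univ.filter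
              (fun l : Fin n => n - t ≤ (l : ℕ) ∧ (l : ℕ) < (j : ℕ)),
            ((Matrix.of fun (x : Fin a) (y : Fin (c t l)) =>
                Hcol t l (j, x) y).rank : ℤ))
        = ∑ i ∈ Finset.Ico (n - t + 1) n, (Stmt18Proof.rowO c Hcol t i : ℤ) := by
      apply Stmt18Proof.sum_fin_to_Ico' (n - t + 1)
      intro i h
      rw [Stmt18Proof.sum_fin_to_Ico (n - t) i (le_of_lt h)
        (fun l : Fin n => ((Matrix.of fun (x : Fin a) (y : Fin (c t l)) =>
            Hcol t l ((⟨i, h⟩ : Fin n), x) y).rank : ℤ))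
        (fun ℓ => (Stmt18Proof.oo c Hcol t i ℓ : ℤ))
        (fun ℓ hℓ => by
          have hnat : Stmt18Proof.oo c Hcol t i ℓ
              = (Matrix.of fun (x : Fin a) (y : Fin (c t (⟨ℓ, hℓ⟩ : Fin n))) =>
                  Hcol t ⟨ℓ, hℓ⟩ ((⟨i, h⟩ : Fin n), x) y).rank :=
            (Stmt18Proof.block_rank c Hcol t ⟨i, h⟩ ⟨ℓ, hℓ⟩).symm
          exact congrArg (Nat.cast : ℕ → ℤ) hnat)]
      simp only [Stmt18Proof.rowO, Nat.cast_sum]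
    rw [hout]
    have hOsplit : Stmt18Proof.OO c Hcol t
        = ∑ i ∈ Finset.Ico (n - t + 1) n, Stmt18Proof.rowO c Hcol t i := by
      have h1 : Finset.Ico (n - t) n
          = insert (n - t) (Finset.Ico (n - t + 1) n) :=
        (Finset.insert_Ico_add_one_left_eq_Ico (show n - t < n by omega)).symm
      have hz : Stmt18Proof.rowO c Hcol t (n - t) = 0 := by
        simp only [Stmt18Proof.rowO]
        simp [Finset.Ico_self]
      simp only [Stmt18Proof.OO]
      rw [h1, Finset.sum_insert (by simp [Finset.mem_Ico]), hz, zero_add]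
    rw [hOsplit, Nat.cast_sum]
  rw [ge_iff_le, hR, hD, hO]
  have keyZ : 2 * ((s : ℤ) + 1) * (Stmt18Proof.DD c Hcol t : ℤ)
      ≤ 2 * (Stmt18Proof.OO c Hcol t : ℤ)
        + ((s : ℤ) + 1) * ((s : ℤ) + 2) * (Stmt18Proof.RR c Hcol t : ℤ) := by
    exact_mod_cast key
  linarith
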